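/- One-step simulation of Φ-rewriting by the lambda calculus: if t is a canonical Φ-term and t → u in Φ, then ⌈t⌉ →v ⌈u⌉ under weak call-by-value reduction. -/

import Mathlib

/-- Pure untyped λ-terms with named variables. -/
inductive Tm : Type
  | var : ℕ → Tm
  | lam : ℕ → Tm → Tm
  | app : Tm → Tm → Tm
deriving DecidableEq

namespace Tm

/-- Free variables. -/
def fv : Tm → Finset ℕ
  | var x => {x}
  | lam x M => fv M \ {x}
  | app M N => fv M ∪ fv N

/-- A term is closed when it has no free variables. -/
def Closed (M : Tm) : Prop := fv M = ∅

/-- Values: variables and abstractions. -/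
def IsValue : Tm → Prop
  | var _ => True
  | lam _ _ => True
  | app _ _ => False

/-- (Naive) substitution `M{N/x}`. -/
def subst : Tm → ℕ → Tm → Tm
  | var y, x, N => if y = x then N else var y
  | lam y P, x, N => if y = x then lam y P else lam y (subst P x N)
  | app P Q, x, N => app (subst P x N) (subst Q x N)

/-- Weak call-by-value reduction: β-redexes whose argument is a value,
closed under both application contexts, never under λ. -/
inductive Cbv : Tm → Tm → Prop
  | beta {x M V} : IsValue V → Cbv (app (lam x M) V) (subst M x V)
  | appL {M N L} : Cbv M N → Cbv (app M L) (app N L)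
  | appR {M N L} : Cbv M N → Cbv (app L M) (app L N)

/-- The subterm relation on λ-terms. -/
inductive Sub : Tm → Tm → Prop
  | refl (M) : Sub M M
  | lam {M N x} : Sub M N → Sub M (lam x N)
  | appL {M N L} : Sub M N → Sub M (app N L)
  | appR {M N L} : Sub M L → Sub M (app N L)

end Tm

/-- `M N₁ … Nₖ` (left-nested application). -/
def appList : Tm → List Tm → Tm := List.foldl Tm.app

/-- `λx₁.…λxₖ.M`. -/
def lams : List ℕ → Tm → Tm := fun xs M => xs.foldr Tm.lam M

/-- `stepsN R n a b`: `a` reduces to `b` in exactly `n` `R`-steps. -/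
def stepsN {α : Type*} (R : α → α → Prop) : ℕ → α → α → Prop
  | 0, a, b => a = b
  | n + 1, a, b => ∃ c, R a c ∧ stepsN R n c b

/-- `a` is an `R`-normal form. -/
def NormalForm {α : Type*} (R : α → α → Prop) (a : α) : Prop := ¬ ∃ b, R a b

/-- Terms of the constructor rewrite system Φ: variables, the binary function
symbol `app`, and a constructor `c_{x,M}` for each variable `x` and λ-term `M`. -/
inductive PTm : Type
  | pvar : ℕ → PTm
  | papp : PTm → PTm → PTm
  | con : ℕ → Tm → List PTm → PTm

namespace PTm

/-- The (sorted) list of free variables of a λ-term. -/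
def fvList (M : Tm) : List ℕ := (Tm.fv M).sort (· ≤ ·)

/-- The translation `⌊·⌋` from λ-terms to Φ-terms. -/
def toP : Tm → PTm
  | .var x => pvar x
  | .lam x M => con x M ((fvList (Tm.lam x M)).map pvar)
  | .app M N => papp (toP M) (toP N)

/-- Simultaneous (sequential, for closed arguments) λ-substitution `M{Nᵢ/xᵢ}`. -/
def substList (M : Tm) (xs : List ℕ) (Ns : List Tm) : Tm :=
  (xs.zip Ns).foldl (fun acc p => Tm.subst acc p.1 p.2) M

/-- The readback `⌈·⌉` from Φ-terms to λ-terms. -/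
def toL : PTm → Tm
  | pvar x => .var x
  | papp u v => .app (toL u) (toL v)
  | con x M ts =>
      substList (Tm.lam x M) (fvList (Tm.lam x M)) (ts.attach.map fun t => toL t.1)
termination_by t => sizeOf t
decreasing_by all_goals first
  | (simp_wf; have := List.sizeOf_lt_of_mem t.2; omega)
  | (simp_wf; omega)
  | simp_wf

/-- First-order substitution on Φ-terms. -/
def psubst : PTm → ℕ → PTm → PTm
  | pvar y, x, N => if y = x then N else pvar y
  | papp u v, x, N => papp (psubst u x N) (psubst v x N)
  | con y M ts, x, N => con y M (ts.attach.map fun t => psubst t.1 x N)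
termination_by t _ _ => sizeOf t
decreasing_by all_goals first
  | (simp_wf; have := List.sizeOf_lt_of_mem t.2; omega)
  | (simp_wf; omega)
  | simp_wf

/-- Simultaneous (sequential, for ground arguments) substitution on Φ-terms. -/
def psubstList (t : PTm) (xs : List ℕ) (us : List PTm) : PTm :=
  (xs.zip us).foldl (fun acc p => psubst acc p.1 p.2) t

/-- Constructor terms of Φ: ground terms built from constructors only. -/
inductive IsConT : PTm → Prop
  | con {x M ts} : (∀ t ∈ ts, IsConT t) → IsConT (con x M ts)

/-- Well-formed Φ-terms: every constructor `c_{x,M}` gets exactly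
`|FV(λx.M)|` arguments. -/
inductive WF : PTm → Prop
  | pvar (x) : WF (pvar x)
  | papp {u v} : WF u → WF v → WF (papp u v)
  | con {x M ts} : ts.length = (fvList (Tm.lam x M)).length →
      (∀ t ∈ ts, WF t) → WF (con x M ts)

/-- Canonical closed Φ-terms: constructor terms, or `app` of canonical terms. -/
inductive Canonical : PTm → Prop
  | ofCon {t} : IsConT t → Canonical t
  | papp {u v} : Canonical u → Canonical v → Canonical (papp u v)

/-- Call-by-value rewriting in Φ: the rules are
`app(c_{x,M}(x₁,…,xₙ), x) → ⌊M⌋` (with `FV(λx.M) = x₁,…,xₙ`), matched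
variables are instantiated by constructor terms, and rewriting is closed
under arbitrary contexts. -/
inductive Step : PTm → PTm → Prop
  | beta {x : ℕ} {M : Tm} {ts : List PTm} {v : PTm} :
      (∀ t ∈ ts, IsConT t) → IsConT v →
      ts.length = (fvList (Tm.lam x M)).length →
      Step (papp (con x M ts) v)
        (psubstList (toP M) (fvList (Tm.lam x M) ++ [x]) (ts ++ [v]))
  | appL {u u' v} : Step u u' → Step (papp u v) (papp u' v)
  | appR {u v v'} : Step v v' → Step (papp u v) (papp u v')
  | conArg {x M t t' l r} : Step t t' →
      Step (con x M (l ++ t :: r)) (con x M (l ++ t' :: r))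

/-- Variables occurring in a Φ-term. -/
def pvarsOf : PTm → Finset ℕ
  | pvar x => {x}
  | papp u v => pvarsOf u ∪ pvarsOf v
  | con _ _ ts => ts.attach.foldr (fun t s => pvarsOf t.1 ∪ s) ∅
termination_by t => sizeOf t
decreasing_by all_goals first
  | (simp_wf; have := List.sizeOf_lt_of_mem t.2; omega)
  | (simp_wf; omega)
  | simp_wf

/-- The subterm relation on Φ-terms. -/
inductive PSub : PTm → PTm → Prop
  | refl (t) : PSub t t
  | appL {t u v} : PSub t u → PSub t (papp u v)
  | appR {t u v} : PSub t v → PSub t (papp u v)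
  | conArg {t u x M ts} : u ∈ ts → PSub t u → PSub t (con x M ts)

end PTm
namespace Tm

theorem subst_of_not_mem {M : Tm} {x : ℕ} (N : Tm) (h : x ∉ M.fv) : M.subst x N = M := by
  induction M with
  | var y =>
      simp [fv] at h
      simp [subst]
      intro hyx; exact absurd hyx.symm h
  | lam y P ih =>
      by_cases hy : y = x
      · simp [subst, hy]
      · simp [fv, Finset.mem_sdiff] at h
        simp [subst, hy, ih (fun hx => by simp [h hx] at hy)]
  | app P Q ih1 ih2 => simp [fv] at h; simp [subst, ih1 h.1, ih2 h.2]

theorem subst_closed {M : Tm} (x : ℕ) {N : Tm} (h : N.Closed) : N.subst x M = N :=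
  subst_of_not_mem M (by simp [Closed] at h; simp [h])

theorem mem_fv_subst {M : Tm} {x : ℕ} {N : Tm} {a : ℕ} (ha : a ∈ (M.subst x N).fv) :
    (a ∈ M.fv ∧ a ≠ x) ∨ a ∈ N.fv := by
  induction M with
  | var y =>
      by_cases hy : y = x
      · simp [subst, hy] at ha; tauto
      · simp [subst, hy, fv] at ha ⊢; subst ha; tauto
  | lam y P ih =>
      by_cases hy : y = x
      · subst hy; simp [subst, fv] at ha ⊢
        tauto
      · simp [subst, hy, fv] at ha ⊢
        rcases ih ha.1 with h | h
        · exact Or.inl ⟨⟨h.1, ha.2⟩, h.2⟩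
        · exact Or.inr h
  | app P Q ih1 ih2 =>
      simp [subst, fv] at ha ⊢
      rcases ha with ha | ha
      · rcases ih1 ha with h | h <;> tauto
      · rcases ih2 ha with h | h <;> tauto

theorem not_mem_fv_subst {M : Tm} {x y : ℕ} {N : Tm} (h1 : y ∉ M.fv ∨ y = x)
    (h2 : y ∉ N.fv) : y ∉ (M.subst x N).fv := by
  intro hy
  rcases mem_fv_subst hy with h | h
  · rcases h1 with h1 | h1
    · exact h1 h.1
    · exact h.2 h1
  · exact h2 h

theorem subst_var_self (M : Tm) (x : ℕ) : M.subst x (.var x) = M := by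
  induction M with
  | var y => by_cases hy : y = x <;> simp [subst, hy]
  | lam y P ih => by_cases hy : y = x <;> simp [subst, hy, ih]
  | app P Q ih1 ih2 => simp [subst, ih1, ih2]

theorem subst_comm {M N P : Tm} {x y : ℕ} (hxy : x ≠ y) (hN : y ∉ N.fv) (hP : x ∉ P.fv) :
    (M.subst x N).subst y P = (M.subst y P).subst x N := by
  induction M with
  | var z =>
      by_cases hzx : z = x
      · subst hzx
        simp [subst, hxy, subst_of_not_mem _ hN]
      · by_cases hzy : z = y
        · subst hzy; simp [subst, hzx, Ne.symm hxy, subst_of_not_mem _ hP]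
        · simp [subst, hzx, hzy]
  | lam z Q ih =>
      by_cases hzx : z = x
      · subst hzx; simp [subst, hxy]
      · by_cases hzy : z = y
        · subst hzy; simp [subst, Ne.symm hxy]
        · simp [subst, hzx, hzy, ih]
  | app Q R ih1 ih2 => simp [subst, ih1, ih2]

end Tm
namespace PTm

theorem substList_nil (M : Tm) (xs : List ℕ) : substList M xs [] = M := by
  simp [substList]

theorem substList_nil' (M : Tm) (Bs : List Tm) : substList M [] Bs = M := by
  simp [substList]

theorem substList_cons (M : Tm) (x : ℕ) (xs : List ℕ) (B : Tm) (Bs : List Tm) :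
    substList M (x :: xs) (B :: Bs) = substList (M.subst x B) xs Bs := by
  simp [substList]

theorem substList_lam {z : ℕ} {xs : List ℕ} (M : Tm) (Bs : List Tm) (hz : z ∉ xs) :
    substList (.lam z M) xs Bs = .lam z (substList M xs Bs) := by
  induction xs generalizing M Bs with
  | nil => simp [substList_nil']
  | cons w xs ih =>
      cases Bs with
      | nil => simp [substList_nil]
      | cons B Bs =>
          simp at hz
          rw [substList_cons, substList_cons]
          rw [show Tm.subst (.lam z M) w B = .lam z (M.subst w B) by
            simp [Tm.subst]; intro h; exact absurd h hz.1]
          exact ih _ _ hz.2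

theorem substList_vars (M : Tm) (xs : List ℕ) : substList M xs (xs.map .var) = M := by
  induction xs generalizing M with
  | nil => simp [substList_nil]
  | cons w xs ih => rw [List.map_cons, substList_cons, Tm.subst_var_self]; exact ih _

theorem not_mem_fv_substList {y : ℕ} {M : Tm} {xs : List ℕ} {Bs : List Tm}
    (hM : y ∉ M.fv) (hB : ∀ B ∈ Bs, y ∉ B.fv) : y ∉ (substList M xs Bs).fv := by
  induction xs generalizing M Bs with
  | nil => simpa [substList_nil']
  | cons w xs ih =>
      cases Bs with
      | nil => simpa [substList_nil]
      | cons B Bs =>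
          rw [substList_cons]
          exact ih (Tm.not_mem_fv_subst (Or.inl hM) (hB B (by simp)))
            (fun B hb => hB B (by simp [hb]))

theorem mem_fv_substList {a : ℕ} {M : Tm} {xs : List ℕ} {Bs : List Tm}
    (hlen : xs.length = Bs.length) (hB : ∀ B ∈ Bs, B.Closed)
    (ha : a ∈ (substList M xs Bs).fv) : a ∈ M.fv ∧ a ∉ xs := by
  induction xs generalizing M Bs with
  | nil => simp [substList_nil'] at ha; simp [ha]
  | cons w xs ih =>
      cases Bs with
      | nil => simp at hlen
      | cons B Bs =>
          rw [substList_cons] at ha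
          have hBc : B.Closed := hB B (by simp)
          obtain ⟨h1, h2⟩ := ih (by simpa using hlen) (fun B hb => hB B (by simp [hb])) ha
          rcases Tm.mem_fv_subst h1 with h | h
          · exact ⟨h.1, by simp [h.2, h2]⟩
          · simp [Tm.Closed] at hBc; simp [hBc] at h

theorem substList_subst_of_not_mem {y : ℕ} {C M : Tm} {xs : List ℕ} {Bs : List Tm}
    (hy : y ∉ xs) (hB : ∀ B ∈ Bs, y ∉ B.fv) (hC : C.Closed) :
    (substList M xs Bs).subst y C = substList (M.subst y C) xs Bs := by
  induction xs generalizing M Bs with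
  | nil => simp [substList_nil']
  | cons w xs ih =>
      cases Bs with
      | nil => simp [substList_nil]
      | cons B Bs =>
          simp at hy
          rw [substList_cons, substList_cons,
            ih hy.2 (fun B hb => hB B (by simp [hb])),
            Tm.subst_comm (fun h => hy.1 h.symm) (hB B (by simp))
              (by simp [Tm.Closed] at hC; simp [hC])]

theorem forall₂_mem_right {α β : Type*} {R : α → β → Prop} {xs : List α} {ys : List β}
    (h : List.Forall₂ R xs ys) {b : β} (hb : b ∈ ys) : ∃ a ∈ xs, R a b := by
  induction h with
  | nil => simp at hb
  | cons hr _ ih =>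
      rcases List.mem_cons.mp hb with rfl | hb
      · exact ⟨_, by simp, hr⟩
      · obtain ⟨a, ha, hra⟩ := ih hb; exact ⟨a, by simp [ha], hra⟩

theorem substList_subst {y : ℕ} {C M : Tm} {xs : List ℕ} {Bs : List Tm}
    (hnd : xs.Nodup) (hy : y ∈ xs)
    (hB : List.Forall₂ (fun w B => B = Tm.var w ∨ B.Closed) xs Bs) (hC : C.Closed) :
    (substList M xs Bs).subst y C = substList M xs (Bs.map (Tm.subst · y C)) := by
  induction xs generalizing M Bs with
  | nil => simp at hy
  | cons w xs ih =>
      rcases hB with _ | ⟨hwB, hB⟩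
      rename_i B Bs
      have hCy : ∀ a, a ∉ C.fv := by simp [Tm.Closed] at hC; simp [hC]
      simp at hnd
      by_cases hwy : w = y
      · subst hwy
        have hBs : ∀ B' ∈ Bs, w ∉ B'.fv := by
          intro B' hb'
          obtain ⟨w', hw', hr⟩ := forall₂_mem_right hB hb'
          rcases hr with rfl | h
          · simp [Tm.fv]; exact fun h => hnd.1 (h ▸ hw')
          · simp [Tm.Closed] at h; simp [h]
        have hmap : Bs.map (Tm.subst · w C) = Bs := by
          conv_rhs => rw [← List.map_id Bs]
          exact List.map_congr_left (fun B' hb' => Tm.subst_of_not_mem _ (hBs B' hb'))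
        rcases hwB with rfl | hcl
        · rw [substList_cons, Tm.subst_var_self, List.map_cons, substList_cons,
            show (Tm.var w).subst w C = C from by simp [Tm.subst], hmap]
          exact substList_subst_of_not_mem hnd.1 hBs hC
        · have hwB' : w ∉ B.fv := by simp [Tm.Closed] at hcl; simp [hcl]
          rw [substList_cons, List.map_cons, substList_cons, Tm.subst_closed _ hcl, hmap,
            substList_subst_of_not_mem hnd.1 hBs hC,
            Tm.subst_of_not_mem _ (Tm.not_mem_fv_subst (Or.inr rfl) hwB')]
      · have hy' : y ∈ xs := by
          rcases List.mem_cons.mp hy with h | h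
          · exact absurd h.symm hwy
          · exact h
        rcases hwB with rfl | hcl
        · rw [substList_cons, List.map_cons, substList_cons]
          rw [show (Tm.var w).subst y C = Tm.var w from by simp [Tm.subst, hwy]]
          exact ih hnd.2 hy' hB
        · rw [substList_cons, List.map_cons, substList_cons, Tm.subst_closed _ hcl]
          exact ih hnd.2 hy' hB

end PTm
namespace PTm

theorem attach_map' {α β : Type*} (l : List α) (f : α → β) :
    l.attach.map (fun t => f t.1) = l.map f := by
  rw [List.attach_map_val]

theorem toL_con (z : ℕ) (N : Tm) (ts : List PTm) :
    toL (con z N ts) = substList (.lam z N) (fvList (.lam z N)) (ts.map toL) := by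
  rw [toL, attach_map' ts toL]

theorem psubst_con (z : ℕ) (N : Tm) (ts : List PTm) (x : ℕ) (u : PTm) :
    psubst (con z N ts) x u = con z N (ts.map (psubst · x u)) := by
  rw [psubst, attach_map' ts (psubst · x u)]

theorem psubst_pvar (w x : ℕ) (u : PTm) :
    psubst (pvar w) x u = if w = x then u else pvar w := by rw [psubst]

theorem psubst_papp (a b : PTm) (x : ℕ) (u : PTm) :
    psubst (papp a b) x u = papp (psubst a x u) (psubst b x u) := by rw [psubst]

theorem not_mem_fvList_lam (x : ℕ) (M : Tm) : x ∉ fvList (.lam x M) := by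
  simp [fvList, Finset.mem_sort, Tm.fv]

theorem mem_fvList_lam {w x : ℕ} {M : Tm} (h : w ∈ fvList (.lam x M)) :
    w ∈ M.fv ∧ w ≠ x := by
  simpa [fvList, Finset.mem_sort, Tm.fv] using h

theorem nodup_fvList (M : Tm) : (fvList M).Nodup := Finset.sort_nodup _ _

theorem psubst_of_isConT {s : PTm} (h : IsConT s) (y : ℕ) (u : PTm) :
    psubst s y u = s := by
  induction h with
  | @con z N ts hts ih =>
      rw [psubst_con]
      congr 1
      calc ts.map (psubst · y u) = ts.map id := List.map_congr_left (fun t ht => ih t ht)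
        _ = ts := List.map_id ts

theorem toL_con_lam (z : ℕ) (N : Tm) (ts : List PTm) :
    toL (con z N ts) = .lam z (substList N (fvList (.lam z N)) (ts.map toL)) := by
  rw [toL_con, substList_lam _ _ (not_mem_fvList_lam z N)]

theorem isValue_toL {t : PTm} (h : IsConT t) : (toL t).IsValue := by
  rcases h with @⟨z, N, ts, _⟩
  rw [toL_con_lam]
  trivial

theorem toL_closed {t : PTm} (hwf : WF t) (hc : IsConT t) : (toL t).Closed := by
  induction hc with
  | @con z N ts hts ih =>
      rcases hwf with _ | _ | ⟨hlen, hwfts⟩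
      rw [toL_con]
      simp only [Tm.Closed, Finset.eq_empty_iff_forall_notMem]
      intro a ha
      have := mem_fv_substList (by simpa using hlen.symm)
        (by rintro B hB
            simp only [List.mem_map] at hB
            obtain ⟨s, hs, rfl⟩ := hB
            exact ih s hs (hwfts s hs)) ha
      obtain ⟨h1, h2⟩ := this
      simp [Tm.fv] at h1
      exact h2 (by simp [fvList, Finset.mem_sort, Tm.fv, h1.1, h1.2])

/-- The invariant: every constructor subterm's arguments are, position by position,
either the corresponding variable or a well-formed constructor term. -/
inductive Nice : PTm → Prop
  | pvar (x) : Nice (pvar x)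
  | papp {u v} : Nice u → Nice v → Nice (papp u v)
  | con {z N ts} :
      List.Forall₂ (fun w t => t = pvar w ∨ (IsConT t ∧ WF t)) (fvList (Tm.lam z N)) ts →
      Nice (con z N ts)

theorem nice_of_isConT {t : PTm} (h1 : IsConT t) (h2 : WF t) : Nice t := by
  induction h1 with
  | @con z N ts hts _ =>
      rcases h2 with _ | _ | ⟨hlen, hwf⟩
      refine Nice.con (List.forall₂_iff_zip.mpr ⟨hlen.symm, ?_⟩)
      intro w s hws
      have hs : s ∈ ts := (List.of_mem_zip hws).2
      exact Or.inr ⟨hts s hs, hwf s hs⟩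

theorem nice_toP (M : Tm) : Nice (toP M) := by
  induction M with
  | var x => exact Nice.pvar x
  | lam x M _ =>
      refine Nice.con ?_
      rw [List.forall₂_map_right_iff]
      exact List.forall₂_same.mpr (fun w _ => Or.inl rfl)
  | app M N ih1 ih2 => exact Nice.papp ih1 ih2

theorem nice_psubst {t : PTm} (h : Nice t) {y : ℕ} {u : PTm}
    (hu1 : IsConT u) (hu2 : WF u) : Nice (psubst t y u) := by
  induction h with
  | pvar x =>
      rw [psubst_pvar]
      by_cases hx : x = y
      · simpa [hx] using nice_of_isConT hu1 hu2
      · simpa [hx] using Nice.pvar x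
  | papp _ _ ih1 ih2 => rw [psubst_papp]; exact Nice.papp ih1 ih2
  | con hts =>
      rw [psubst_con]
      refine Nice.con ?_
      rw [List.forall₂_map_right_iff]
      refine hts.imp ?_
      rintro w s (rfl | ⟨hs1, hs2⟩)
      · rw [psubst_pvar]
        by_cases hw : w = y
        · simpa [hw] using Or.inr ⟨hu1, hu2⟩
        · simpa [hw] using Or.inl rfl
      · rw [psubst_of_isConT hs1]
        exact Or.inr ⟨hs1, hs2⟩

end PTm
namespace PTm

theorem toL_pvar (x : ℕ) : toL (pvar x) = .var x := by rw [toL]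

theorem toL_papp (a b : PTm) : toL (papp a b) = .app (toL a) (toL b) := by rw [toL]

theorem mem_fvList_lam' {w x : ℕ} {M : Tm} (h1 : w ∈ M.fv) (h2 : w ≠ x) :
    w ∈ fvList (.lam x M) := by
  simp [fvList, Finset.mem_sort, Tm.fv, h1, h2]

/-- Key commutation: readback of a Φ-substitution is a λ-substitution. -/
theorem toL_psubst {t : PTm} (ht : Nice t) {y : ℕ} {u : PTm}
    (hu1 : IsConT u) (hu2 : WF u) :
    toL (psubst t y u) = (toL t).subst y (toL u) := by
  have hC : (toL u).Closed := toL_closed hu2 hu1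
  induction ht with
  | pvar x =>
      rw [psubst_pvar, toL_pvar]
      by_cases hx : x = y
      · simp [hx, Tm.subst]
      · simp [hx, Tm.subst, toL_pvar]
  | papp _ _ ih1 ih2 =>
      rw [psubst_papp, toL_papp, toL_papp, ih1, ih2]
      rfl
  | @con z N ts hts =>
      have hzf := not_mem_fvList_lam z N
      have hFB : List.Forall₂ (fun w B => B = Tm.var w ∨ B.Closed)
          (fvList (.lam z N)) (ts.map toL) := by
        rw [List.forall₂_map_right_iff]
        refine hts.imp ?_
        rintro w s (rfl | ⟨h1, h2⟩)
        · exact Or.inl (toL_pvar w)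
        · exact Or.inr (toL_closed h2 h1)
      have hCy : ∀ a, a ∉ (toL u).fv := by
        simp only [Tm.Closed] at hC; simp [hC]
      rw [psubst_con, toL_con_lam, toL_con_lam]
      have hmap : (ts.map (psubst · y u)).map toL = (ts.map toL).map (Tm.subst · y (toL u)) := by
        rw [List.map_map, List.map_map]
        refine List.map_congr_left ?_
        intro s hs
        obtain ⟨w, hw, hr⟩ := forall₂_mem_right hts hs
        rcases hr with rfl | ⟨h1, h2⟩
        · simp only [Function.comp_apply]
          rw [psubst_pvar, toL_pvar]
          by_cases hwy : w = y
          · simp [hwy, Tm.subst]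
          · simp [hwy, Tm.subst, toL_pvar]
        · simp only [Function.comp_apply]
          rw [psubst_of_isConT h1, Tm.subst_closed _ (toL_closed h2 h1)]
      rw [hmap]
      by_cases hzy : z = y
      · subst hzy
        rw [show (Tm.lam z (substList N (fvList (.lam z N)) (ts.map toL))).subst z (toL u)
            = Tm.lam z (substList N (fvList (.lam z N)) (ts.map toL)) from by simp [Tm.subst]]
        congr 1
        have : (ts.map toL).map (Tm.subst · z (toL u)) = ts.map toL := by
          conv_rhs => rw [← List.map_id (ts.map toL)]
          refine List.map_congr_left ?_
          intro B hB
          obtain ⟨w, hw, hr⟩ := forall₂_mem_right hFB hB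
          rcases hr with rfl | hcl
          · have hwz : w ≠ z := fun h => hzf (h ▸ hw)
            simp [Tm.subst, hwz]
          · exact Tm.subst_closed _ hcl
        rw [this]
      · rw [show (Tm.lam z (substList N (fvList (.lam z N)) (ts.map toL))).subst y (toL u)
            = Tm.lam z ((substList N (fvList (.lam z N)) (ts.map toL)).subst y (toL u)) from by
              simp [Tm.subst]; intro h; exact absurd h hzy]
        congr 1
        by_cases hyf : y ∈ fvList (.lam z N)
        · exact (substList_subst (nodup_fvList _) hyf hFB hC).symm
        · have hyN : y ∉ N.fv := fun h => hyf (mem_fvList_lam' h (fun he => hzy he.symm))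
          have hyB : ∀ B ∈ ts.map toL, y ∉ B.fv := by
            intro B hB
            obtain ⟨w, hw, hr⟩ := forall₂_mem_right hFB hB
            rcases hr with rfl | hcl
            · have : w ≠ y := fun h => hyf (h ▸ hw)
              simp [Tm.fv]; exact fun h => this h.symm
            · simp only [Tm.Closed] at hcl; simp [hcl]
          have hmap2 : (ts.map toL).map (Tm.subst · y (toL u)) = ts.map toL := by
            conv_rhs => rw [← List.map_id (ts.map toL)]
            exact List.map_congr_left (fun B hB => Tm.subst_of_not_mem _ (hyB B hB))
          rw [hmap2, Tm.subst_of_not_mem _ (not_mem_fv_substList hyN hyB)]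

theorem psubstList_nil (t : PTm) (xs : List ℕ) : psubstList t xs [] = t := by
  simp [psubstList]

theorem psubstList_nil' (t : PTm) (us : List PTm) : psubstList t [] us = t := by
  simp [psubstList]

theorem psubstList_cons (t : PTm) (x : ℕ) (xs : List ℕ) (u : PTm) (us : List PTm) :
    psubstList t (x :: xs) (u :: us) = psubstList (psubst t x u) xs us := by
  simp [psubstList]

theorem toL_psubstList {t : PTm} (ht : Nice t) {xs : List ℕ} {us : List PTm}
    (hus : ∀ u ∈ us, IsConT u ∧ WF u) :
    toL (psubstList t xs us) = substList (toL t) xs (us.map toL) := by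
  induction xs generalizing t us with
  | nil => simp [psubstList_nil', substList_nil']
  | cons x xs ih =>
      cases us with
      | nil => simp [psubstList_nil, substList_nil]
      | cons u us =>
          have hu := hus u (by simp)
          rw [psubstList_cons, List.map_cons, substList_cons,
            ← toL_psubst ht hu.1 hu.2]
          exact ih (nice_psubst ht hu.1 hu.2) (fun u' hu' => hus u' (by simp [hu']))

theorem toL_toP (M : Tm) : toL (toP M) = M := by
  induction M with
  | var x => rw [toP, toL_pvar]
  | lam x M _ =>
      rw [toP, toL_con]
      rw [List.map_map, show toL ∘ pvar = Tm.var from funext toL_pvar, substList_vars]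
  | app M N ih1 ih2 => rw [toP, toL_papp, ih1, ih2]

theorem not_isConT_of_step {t u : PTm} (h : Step t u) : ¬ IsConT t := by
  induction h with
  | beta => rintro ⟨⟩
  | appL => rintro ⟨⟩
  | appR => rintro ⟨⟩
  | conArg _ ih =>
      rintro ⟨hts⟩
      exact ih (hts _ (by simp))

theorem substList_snoc {M : Tm} {xs : List ℕ} {Bs : List Tm} (h : xs.length = Bs.length)
    (x : ℕ) (B : Tm) :
    substList M (xs ++ [x]) (Bs ++ [B]) = (substList M xs Bs).subst x B := by
  rw [substList, List.zip_append h, List.foldl_append]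
  rfl

end PTm

/-- one-step simulation of Φ-rewriting by the λ-calculus:
if `t` is canonical and `t → u` in Φ, then `⌈t⌉ →v ⌈u⌉`. -/
theorem step_simulates (t u : PTm) (hwf : PTm.WF t) (hc : PTm.Canonical t)
    (h : PTm.Step t u) : Tm.Cbv (PTm.toL t) (PTm.toL u) := by
  revert hwf hc
  induction h with
  | @beta x M ts v hts hv hlen =>
      intro hwf hc
      cases hwf with
      | papp hwfc hwfv =>
      cases hwfc with
      | con hlen' hwfts =>
      rw [PTm.toL_papp, PTm.toL_con_lam]
      have hres : PTm.toL (PTm.psubstList (PTm.toP M)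
            (PTm.fvList (Tm.lam x M) ++ [x]) (ts ++ [v]))
          = PTm.substList M (PTm.fvList (Tm.lam x M) ++ [x]) ((ts ++ [v]).map PTm.toL) := by
        rw [PTm.toL_psubstList (PTm.nice_toP M) ?hus, PTm.toL_toP]
        case hus =>
          intro u' hu'
          rcases List.mem_append.mp hu' with h | h
          · exact ⟨hts u' h, hwfts u' h⟩
          · simp at h; subst h; exact ⟨hv, hwfv⟩
      rw [hres, List.map_append, List.map_singleton,
        PTm.substList_snoc (by simpa using hlen.symm) x (PTm.toL v)]
      exact Tm.Cbv.beta (PTm.isValue_toL hv)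
  | appL hst ih =>
      intro hwf hc
      cases hwf with
      | papp h1 h2 =>
      cases hc with
      | ofCon hct => cases hct
      | papp hc1 hc2 =>
          rw [PTm.toL_papp, PTm.toL_papp]
          exact Tm.Cbv.appL (ih h1 hc1)
  | appR hst ih =>
      intro hwf hc
      cases hwf with
      | papp h1 h2 =>
      cases hc with
      | ofCon hct => cases hct
      | papp hc1 hc2 =>
          rw [PTm.toL_papp, PTm.toL_papp]
          exact Tm.Cbv.appR (ih h2 hc2)
  | conArg hst ih =>
      intro hwf hc
      cases hc with
      | ofCon hct =>
          cases hct with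
          | con hts =>
              exact absurd (hts _ (by simp)) (PTm.not_isConT_of_step hst)
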